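/- Let c > 0 and x₀ < y₀, and suppose ζ : [x₀, y₀] → ℝ is C¹ on [x₀, y₀] and C⁴ on (x₀, y₀), satisfies ζ⁗(x) + c·ζ″(x) = 0 for all x ∈ (x₀, y₀), is strictly positive on (x₀, y₀), and satisfies ζ(x₀) = ζ(y₀) = 0 and ζ′(x₀) = ζ′(y₀) = 0. Then, with β := √c, the length of the interval is y₀ − x₀ = 2π/β, and there exists a constant A₀ > 0 such that ζ(x) = A₀·(cos(β·(x − m)) + 1) for all x ∈ [x₀, y₀], where m := (x₀ + y₀)/2 is the midpoint of the interval. -/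

import Mathlib

open Real Set

private noncomputable def trigf (A B D E β m : ℝ) : ℝ → ℝ :=
  fun t => A * Real.cos (β * (t - m)) + B * Real.sin (β * (t - m)) + D * t + E

private lemma hasDerivAt_trigf (A B D E β m x : ℝ) :
    HasDerivAt (trigf A B D E β m) (trigf (B * β) (-(A * β)) 0 D β m x) x := by
  have h : HasDerivAt (fun t : ℝ => β * (t - m)) β x := by
    simpa using ((hasDerivAt_id x).sub_const m).const_mul β
  have h1 := h.cos.const_mul A
  have h2 := h.sin.const_mul B
  have h3 : HasDerivAt (fun t : ℝ => D * t) D x := by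
    simpa using (hasDerivAt_id x).const_mul D
  have H := ((h1.add h2).add h3).add_const E
  have he : trigf (B * β) (-(A * β)) 0 D β m x
      = A * (-Real.sin (β * (x - m)) * β) + B * (Real.cos (β * (x - m)) * β) + D := by
    simp only [trigf]; ring
  rw [he]
  exact H

private lemma continuous_trigf (A B D E β m : ℝ) : Continuous (trigf A B D E β m) := by
  unfold trigf; fun_prop

private lemma const_on_Ioo {a b : ℝ} {f : ℝ → ℝ}
    (hf : ∀ x ∈ Ioo a b, HasDerivAt f 0 x) {x y : ℝ}
    (hx : x ∈ Ioo a b) (hy : y ∈ Ioo a b) : f x = f y := by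
  refine (convex_Ioo a b).is_const_of_fderivWithin_eq_zero
    (fun z hz => ((hf z hz).differentiableAt).differentiableWithinAt) (fun z hz => ?_) hx hy
  rw [fderivWithin_of_isOpen isOpen_Ioo hz, (hf z hz).hasFDerivAt.fderiv]
  ext; simp

set_option maxHeartbeats 1000000 in
theorem stmt_19 (c x₀ y₀ : ℝ) (hc : 0 < c) (hxy : x₀ < y₀) (ζ : ℝ → ℝ)
    (h1 : ContDiffOn ℝ 1 ζ (Icc x₀ y₀))
    (h4 : ContDiffOn ℝ 4 ζ (Ioo x₀ y₀))
    (hode : ∀ x ∈ Ioo x₀ y₀, iteratedDeriv 4 ζ x + c * iteratedDeriv 2 ζ x = 0)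
    (hpos : ∀ x ∈ Ioo x₀ y₀, 0 < ζ x)
    (hb0 : ζ x₀ = 0) (hb1 : ζ y₀ = 0)
    (hd0 : derivWithin ζ (Icc x₀ y₀) x₀ = 0)
    (hd1 : derivWithin ζ (Icc x₀ y₀) y₀ = 0) :
    y₀ - x₀ = 2 * Real.pi / Real.sqrt c ∧
    ∃ A₀ : ℝ, 0 < A₀ ∧ ∀ x ∈ Icc x₀ y₀,
      ζ x = A₀ * (Real.cos (Real.sqrt c * (x - (x₀ + y₀)/2)) + 1) := by
  set β := Real.sqrt c with hβdef
  have hβ : 0 < β := Real.sqrt_pos.2 hc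
  have hβ2 : β * β = c := Real.mul_self_sqrt hc.le
  set m := (x₀ + y₀) / 2 with hmdef
  set L := (y₀ - x₀) / 2 with hLdef
  have hL : 0 < L := by rw [hLdef]; linarith
  have hmI : m ∈ Ioo x₀ y₀ := ⟨by rw [hmdef]; linarith, by rw [hmdef]; linarith⟩
  have hx0m : x₀ - m = -L := by rw [hmdef, hLdef]; ring
  have hy0m : y₀ - m = L := by rw [hmdef, hLdef]; ring
  have hO : IsOpen (Ioo x₀ y₀) := isOpen_Ioo
  -- derivative infrastructure on the open interval
  have c3 : ContDiffOn ℝ 3 (deriv ζ) (Ioo x₀ y₀) := h4.deriv_of_isOpen hO (by norm_num)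
  have c2 : ContDiffOn ℝ 2 (deriv (deriv ζ)) (Ioo x₀ y₀) := c3.deriv_of_isOpen hO (by norm_num)
  have c1 : ContDiffOn ℝ 1 (deriv (deriv (deriv ζ))) (Ioo x₀ y₀) :=
    c2.deriv_of_isOpen hO (by norm_num)
  have hasD : ∀ g : ℝ → ℝ, ContDiffOn ℝ 1 g (Ioo x₀ y₀) →
      ∀ x ∈ Ioo x₀ y₀, HasDerivAt g (deriv g x) x := fun g hg x hx =>
    ((hg.differentiableOn (by norm_num) x hx).differentiableAt (hO.mem_nhds hx)).hasDerivAt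
  have dζ := hasD ζ (h4.of_le (by norm_num))
  have d1 := hasD (deriv ζ) (c3.of_le (by norm_num))
  have d2 := hasD (deriv (deriv ζ)) (c2.of_le (by norm_num))
  have d3 : ∀ x ∈ Ioo x₀ y₀,
      HasDerivAt (deriv (deriv (deriv ζ))) (-(c * deriv (deriv ζ) x)) x := by
    intro x hx
    have h := hasD _ c1 x hx
    have e2 : iteratedDeriv 2 ζ = deriv (deriv ζ) := by
      simp [iteratedDeriv_succ, iteratedDeriv_zero]
    have e4 : iteratedDeriv 4 ζ = deriv (deriv (deriv (deriv ζ))) := by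
      simp [iteratedDeriv_succ, iteratedDeriv_zero]
    have ho := hode x hx
    rw [e2, e4] at ho
    have : deriv (deriv (deriv (deriv ζ))) x = -(c * deriv (deriv ζ) x) := by linarith
    rwa [this] at h
  -- energy argument: ζ'' = P on the open interval
  set a := deriv (deriv ζ) m with hadef
  set b := deriv (deriv (deriv ζ)) m with hbdef
  set P : ℝ → ℝ := trigf a (b / β) 0 0 β m with hPdef
  set Q : ℝ → ℝ := trigf b (-(a * β)) 0 0 β m with hQdef
  have hP : ∀ x, HasDerivAt P (Q x) x := by
    intro x
    have := hasDerivAt_trigf a (b / β) 0 0 β m x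
    rwa [div_mul_cancel₀ b hβ.ne', show (0:ℝ) = 0 from rfl] at this
  have hQ : ∀ x, HasDerivAt Q (-(c * P x)) x := by
    intro x
    have h := hasDerivAt_trigf b (-(a * β)) 0 0 β m x
    have : trigf (-(a * β) * β) (-(b * β)) 0 0 β m x = -(c * P x) := by
      simp only [trigf, hPdef]
      field_simp
      ring_nf
      rw [← hβ2]; ring
    rwa [this] at h
  have hf2P : ∀ x ∈ Ioo x₀ y₀, deriv (deriv ζ) x = P x := by
    have hv : ∀ x ∈ Ioo x₀ y₀,
        HasDerivAt (fun t => deriv (deriv ζ) t - P t)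
          (deriv (deriv (deriv ζ)) x - Q x) x := fun x hx => (d2 x hx).sub (hP x)
    have hw : ∀ x ∈ Ioo x₀ y₀,
        HasDerivAt (fun t => deriv (deriv (deriv ζ)) t - Q t)
          (-(c * (deriv (deriv ζ) x - P x))) x := by
      intro x hx
      have := (d3 x hx).sub (hQ x)
      exact this.congr_deriv (by ring)
    have hEng : ∀ x ∈ Ioo x₀ y₀,
        HasDerivAt (fun t => (deriv (deriv (deriv ζ)) t - Q t) ^ 2
          + c * (deriv (deriv ζ) t - P t) ^ 2) 0 x := by
      intro x hx
      have h1' := ((hw x hx).pow 2).add (((hv x hx).pow 2).const_mul c)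
      exact h1'.congr_deriv (by ring)
    have hPm : P m = a := by simp [hPdef, trigf]
    have hQm : Q m = b := by simp [hQdef, trigf]
    intro x hx
    have hconst := const_on_Ioo hEng hx hmI
    have hzero : (deriv (deriv (deriv ζ)) x - Q x) ^ 2
        + c * (deriv (deriv ζ) x - P x) ^ 2 = 0 := by
      rw [hconst, hPm, hQm, ← hadef, ← hbdef]
      simp
    have hvle : (deriv (deriv ζ) x - P x) ^ 2 ≤ 0 := by
      nlinarith [sq_nonneg (deriv (deriv (deriv ζ)) x - Q x), sq_nonneg (deriv (deriv ζ) x - P x)]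
    have hv0 : (deriv (deriv ζ) x - P x) ^ 2 = 0 :=
      le_antisymm hvle (sq_nonneg _)
    have := (pow_eq_zero_iff (n := 2) (by norm_num)).1 hv0
    linarith
  -- integrate twice: ζ = trigf A B D E on the open interval
  set A := -(a / c) with hAdef
  set B := -(b / (c * β)) with hBdef
  have hψd' : ∀ x, HasDerivAt (trigf (B * β) (-(A * β)) 0 0 β m) (P x) x := by
    intro x
    have h := hasDerivAt_trigf (B * β) (-(A * β)) 0 0 β m x
    have : trigf (-(A * β) * β) (-(B * β * β)) 0 0 β m x = P x := by
      simp only [trigf, hPdef, hAdef, hBdef]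
      field_simp
      ring_nf
      rw [← hβ2]; ring
    rwa [this] at h
  set D := deriv ζ m - trigf (B * β) (-(A * β)) 0 0 β m m with hDdef
  have hζ' : ∀ x ∈ Ioo x₀ y₀,
      deriv ζ x = trigf (B * β) (-(A * β)) 0 D β m x := by
    intro x hx
    have hG : ∀ z ∈ Ioo x₀ y₀,
        HasDerivAt (fun t => deriv ζ t - trigf (B * β) (-(A * β)) 0 0 β m t) 0 z := by
      intro z hz
      have := (d1 z hz).sub (hψd' z)
      rwa [hf2P z hz, sub_self] at this
    have := const_on_Ioo hG hx hmI
    rw [hDdef]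
    simp only [trigf] at this ⊢
    linarith
  set E := ζ m - trigf A B 0 0 β m m - D * m with hEdef
  have hζF : ∀ x ∈ Ioo x₀ y₀, ζ x = trigf A B D E β m x := by
    intro x hx
    have hG : ∀ z ∈ Ioo x₀ y₀,
        HasDerivAt (fun t => ζ t - trigf A B 0 0 β m t - D * t) 0 z := by
      intro z hz
      have hψ := hasDerivAt_trigf A B 0 0 β m z
      have hD' : HasDerivAt (fun t : ℝ => D * t) D z := by
        simpa using (hasDerivAt_id z).const_mul D
      have := ((dζ z hz).sub hψ).sub hD'
      have heq : deriv ζ z - trigf (B * β) (-(A * β)) 0 0 β m z - D = 0 := by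
        have h := hζ' z hz
        simp only [trigf] at h ⊢
        linarith
      rwa [heq] at this
    have := const_on_Ioo hG hx hmI
    rw [hEdef]
    simp only [trigf] at this ⊢
    linarith
  -- extend to the closed interval via continuity
  have hclos0 : (nhdsWithin x₀ (Ioo x₀ y₀)).NeBot := by
    refine mem_closure_iff_nhdsWithin_neBot.1 ?_
    rw [closure_Ioo hxy.ne]; exact ⟨le_refl _, hxy.le⟩
  have hclos1 : (nhdsWithin y₀ (Ioo x₀ y₀)).NeBot := by
    refine mem_closure_iff_nhdsWithin_neBot.1 ?_
    rw [closure_Ioo hxy.ne]; exact ⟨hxy.le, le_refl _⟩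
  have key : ∀ (g G : ℝ → ℝ) (z : ℝ), (nhdsWithin z (Ioo x₀ y₀)).NeBot →
      ContinuousWithinAt g (Icc x₀ y₀) z → Continuous G →
      (∀ x ∈ Ioo x₀ y₀, g x = G x) → G z = g z := by
    intro g G z hzb hg hG heq
    have t1 : Filter.Tendsto g (nhdsWithin z (Ioo x₀ y₀)) (nhds (g z)) :=
      hg.mono Ioo_subset_Icc_self
    have t3 : Filter.Tendsto G (nhdsWithin z (Ioo x₀ y₀)) (nhds (g z)) := by
      refine t1.congr' ?_
      filter_upwards [self_mem_nhdsWithin] with x hx using heq x hx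
    exact tendsto_nhds_unique hG.continuousAt.continuousWithinAt t3
  have hmem0 : x₀ ∈ Icc x₀ y₀ := ⟨le_refl _, hxy.le⟩
  have hmem1 : y₀ ∈ Icc x₀ y₀ := ⟨hxy.le, le_refl _⟩
  have hF0 : trigf A B D E β m x₀ = 0 := by
    rw [key ζ (trigf A B D E β m) x₀ hclos0 (h1.continuousOn x₀ hmem0)
      (continuous_trigf A B D E β m) hζF, hb0]
  have hF1 : trigf A B D E β m y₀ = 0 := by
    rw [key ζ (trigf A B D E β m) y₀ hclos1 (h1.continuousOn y₀ hmem1)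
      (continuous_trigf A B D E β m) hζF, hb1]
  have hdW : ContinuousOn (derivWithin ζ (Icc x₀ y₀)) (Icc x₀ y₀) :=
    h1.continuousOn_derivWithin (uniqueDiffOn_Icc hxy) le_rfl
  have hdEq : ∀ x ∈ Ioo x₀ y₀,
      derivWithin ζ (Icc x₀ y₀) x = trigf (B * β) (-(A * β)) 0 D β m x := by
    intro x hx
    rw [derivWithin_of_mem_nhds (Icc_mem_nhds hx.1 hx.2)]
    exact hζ' x hx
  have hFd0 : trigf (B * β) (-(A * β)) 0 D β m x₀ = 0 := by
    rw [key (derivWithin ζ (Icc x₀ y₀)) _ x₀ hclos0 (hdW x₀ hmem0)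
      (continuous_trigf _ _ _ _ β m) hdEq, hd0]
  have hFd1 : trigf (B * β) (-(A * β)) 0 D β m y₀ = 0 := by
    rw [key (derivWithin ζ (Icc x₀ y₀)) _ y₀ hclos1 (hdW y₀ hmem1)
      (continuous_trigf _ _ _ _ β m) hdEq, hd1]
  have hζIcc : ∀ x ∈ Icc x₀ y₀, ζ x = trigf A B D E β m x := by
    intro x hx
    rcases hx.1.eq_or_lt with h | h
    · rw [← h, hb0, hF0]
    rcases hx.2.eq_or_lt with h' | h'
    · rw [h', hb1, hF1]
    exact hζF x ⟨h, h'⟩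
  -- boundary equations
  simp only [trigf] at hF0 hF1 hFd0 hFd1
  rw [hx0m] at hF0 hFd0
  rw [hy0m] at hF1 hFd1
  rw [show β * -L = -(β * L) by ring, Real.cos_neg, Real.sin_neg] at hF0 hFd0
  -- hF0 : A * cos (β*L) + B * -sin(β*L) + D*x₀ + E = 0
  -- hF1 : A * cos (β*L) + B * sin(β*L) + D*y₀ + E = 0
  -- hFd0 : B*β * cos(β*L) + -(A*β) * -sin(β*L) + 0*x₀ + D = 0
  -- hFd1 : B*β * cos(β*L) + -(A*β) * sin(β*L) + 0*y₀ + D = 0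
  have hAs : A * Real.sin (β * L) = 0 := by
    have h5 : β * (A * Real.sin (β * L)) = 0 := by nlinarith [hFd0, hFd1]
    exact (mul_eq_zero.1 h5).resolve_left hβ.ne'
  by_cases hs : Real.sin (β * L) = 0
  · -- sin θ = 0 case
    have hD : D = 0 := by
      have h6 : D * (y₀ - x₀) = 0 := by rw [hs] at hF0 hF1; nlinarith [hF0, hF1]
      exact (mul_eq_zero.1 h6).resolve_right (sub_ne_zero.2 hxy.ne')
    have hcos := Real.sin_eq_zero_iff_cos_eq.1 hs
    have hB : B = 0 := by
      rcases hcos with h | h <;>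
      · rw [hs, hD, h] at hFd1
        have : B * β = 0 := by nlinarith [hFd1]
        exact (mul_eq_zero.1 this).resolve_right hβ.ne'
    have hζm : 0 < ζ m := hpos m hmI
    have hFm : ζ m = A + E := by
      rw [hζIcc m (Ioo_subset_Icc_self hmI)]
      simp [trigf, hD, hB]
    rcases hcos with h | h
    · -- cos θ = 1 : contradiction
      exfalso
      rw [hs, hD, hB, h] at hF1
      have : E = -A := by linarith
      rw [hFm, this] at hζm
      linarith
    · -- cos θ = -1
      have hE : E = A := by rw [hs, hD, hB, h] at hF1; linarith
      have hApos : 0 < A := by rw [hFm, hE] at hζm; linarith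
      obtain ⟨n, hn⟩ := Real.sin_eq_zero_iff.1 hs
      have hθpos : 0 < β * L := mul_pos hβ hL
      have hn1 : (1 : ℤ) ≤ n := by
        by_contra hcon
        push_neg at hcon
        have : (n : ℝ) ≤ 0 := by exact_mod_cast (by omega : n ≤ 0)
        nlinarith [Real.pi_pos]
      have hβL : β * L = Real.pi := by
        by_contra hne
        have hn2 : (2 : ℤ) ≤ n := by
          rcases eq_or_lt_of_le hn1 with h1 | h1
          · exfalso; apply hne; rw [← hn, ← h1]; simp
          · omega
        have h2π : 2 * Real.pi ≤ β * L := by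
          have : (2 : ℝ) ≤ (n : ℝ) := by exact_mod_cast hn2
          nlinarith [Real.pi_pos]
        have hpβ : Real.pi / β < L := by
          rw [div_lt_iff₀ hβ]
          nlinarith [Real.pi_pos]
        have hpI : m + Real.pi / β ∈ Ioo x₀ y₀ := by
          constructor
          · have : 0 < Real.pi / β := div_pos Real.pi_pos hβ
            linarith [hmI.1]
          · have : y₀ = m + L := by linarith [hy0m]
            linarith
        have hζp := hpos _ hpI
        rw [hζIcc _ (Ioo_subset_Icc_self hpI)] at hζp
        simp only [trigf, hB, hD, hE] at hζp
        rw [show β * (m + Real.pi / β - m) = Real.pi by field_simp; ring] at hζp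
        rw [Real.cos_pi] at hζp
        linarith
      refine ⟨?_, A, hApos, ?_⟩
      · rw [hLdef] at hβL
        field_simp at hβL ⊢
        linarith
      · intro x hx
        rw [hζIcc x hx]
        simp only [trigf, hB, hD, hE]
        ring
  · -- sin θ ≠ 0 : contradiction via antisymmetry
    exfalso
    have hA : A = 0 := (mul_eq_zero.1 hAs).resolve_right hs
    have hE : D * m + E = 0 := by
      rw [hA] at hF0 hF1
      have : D * (x₀ + y₀) + 2 * E = 0 := by nlinarith [hF0, hF1]
      rw [hmdef]; linear_combination this / 2
    have hp1 : m + L / 2 ∈ Ioo x₀ y₀ :=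
      ⟨by linarith [hmI.1], by linarith [hy0m, hL]⟩
    have hp2 : m - L / 2 ∈ Ioo x₀ y₀ :=
      ⟨by linarith [hx0m, hL], by linarith [hmI.2]⟩
    have h1' := hpos _ hp1
    have h2' := hpos _ hp2
    rw [hζIcc _ (Ioo_subset_Icc_self hp1)] at h1'
    rw [hζIcc _ (Ioo_subset_Icc_self hp2)] at h2'
    simp only [trigf, hA] at h1' h2'
    rw [show β * (m - L / 2 - m) = -(β * (L / 2)) by ring, Real.sin_neg] at h2'
    rw [show β * (m + L / 2 - m) = β * (L / 2) by ring] at h1'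
    have e1 : D * (m + L / 2) = D * m + D * (L / 2) := by ring
    have e2 : D * (m - L / 2) = D * m - D * (L / 2) := by ring
    rw [e1] at h1'
    rw [e2] at h2'
    have e3 : (0:ℝ) * cos (β * (L / 2)) = 0 := by ring
    have e4 : (0:ℝ) * cos (-(β * (L / 2))) = 0 := by ring
    rw [e3] at h1'
    rw [e4] at h2'
    have e5 : B * -Real.sin (β * (L / 2)) = -(B * Real.sin (β * (L / 2))) := by ring
    rw [e5] at h2'
    clear_value β m L A B D E
    linarith [h1', h2', hE]
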